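/- For every Itô *-algebra (𝔞, ⋆, d_t, l) there exist a complex inner product space K and a ℂ-linear map 𝐢 from 𝔞 into the ℂ-linear endomorphisms of M := ℂ × K × ℂ such that, with the Hermitian sesquilinear form ⟨(α,x,β)|(α',x',β')⟩_J := conj(α)·β' + ⟪x,x'⟫ + conj(β)·α' on M, the following hold for all a, b ∈ 𝔞 and u, v ∈ M: (i) 𝐢(a·b) = 𝐢(a) ∘ 𝐢(b); (ii) ⟨𝐢(a⋆)u | v⟩_J = ⟨u | 𝐢(a)v⟩_J; (iii) ⟨k₊ | 𝐢(a) k₊⟩_J = l(a), where k₊ := (0, 0, 1); (iv) 𝐢(d_t)(α, x, β) = (β, 0, 0) for all (α,x,β) ∈ M. (This realizes every Itô *-algebra by pseudo-Hermitian triangular operators on a complex Minkowski space ℂ ⊕ K ⊕ ℂ, with vacuum expectation l.) -/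

import Mathlib

open ComplexOrder in
/-- Every Itô *-algebra can be realized by pseudo-Hermitian triangular
operators on a complex Minkowski space `ℂ ⊕ K ⊕ ℂ` with respect to the indefinite metric
`⟨(α,x,β)|(α',x',β')⟩ = conj α · β' + ⟪x,x'⟫ + conj β · α'`, with vacuum expectation `l`
in the zero-length vector `k₊ = (0,0,1)`, and with `dt` acting as `(α,x,β) ↦ (β,0,0)`. -/
theorem ito_minkowski_representation
    {A : Type} [AddCommGroup A] [Module ℂ A]
    (m : A →ₗ[ℂ] A →ₗ[ℂ] A) (st : A →ₗ⋆[ℂ] A) (dt : A) (l : A →ₗ[ℂ] ℂ)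
    (hassoc : ∀ a b c : A, m (m a b) c = m a (m b c))
    (hstm : ∀ a b : A, st (m a b) = m (st b) (st a))
    (hstst : ∀ a : A, st (st a) = a)
    (hstdt : st dt = dt)
    (hmdt : ∀ a : A, m a dt = 0)
    (hdtm : ∀ a : A, m dt a = 0)
    (hldt : l dt = 1)
    (hlst : ∀ a : A, l (st a) = starRingEnd ℂ (l a))
    (hlpos : ∀ a : A, 0 ≤ l (m (st a) a)) :
    ∃ (K : Type) (_ : NormedAddCommGroup K) (_ : InnerProductSpace ℂ K)
      (I : A →ₗ[ℂ] ((ℂ × K × ℂ) →ₗ[ℂ] (ℂ × K × ℂ))),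
      let J : (ℂ × K × ℂ) → (ℂ × K × ℂ) → ℂ := fun u v =>
        starRingEnd ℂ u.1 * v.2.2 + (inner ℂ u.2.1 v.2.1 : ℂ) + starRingEnd ℂ u.2.2 * v.1
      (∀ a b : A, I (m a b) = (I a) ∘ₗ (I b)) ∧
      (∀ (a : A) (u v : ℂ × K × ℂ), J (I (st a) u) v = J u (I a v)) ∧
      (∀ a : A, J (0, 0, 1) (I a (0, 0, 1)) = l a) ∧
      (∀ u : ℂ × K × ℂ, I dt u = (u.2.2, 0, 0)) := by
  classical
  letI P : PreInnerProductSpace.Core ℂ A :=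
  { inner := fun a b => l (m (st a) b)
    conj_inner_symm := fun x y => by
      have h1 : (starRingEnd ℂ) (l (m (st y) x)) = l (st (m (st y) x)) := (hlst _).symm
      simpa [hstm, hstst] using h1
    re_inner_nonneg := fun x => by
      have := hlpos x
      rw [Complex.le_def] at this
      simpa using this.1
    add_left := fun x y z => by
      simp [map_add]
    smul_left := fun x y r => by
      simp [map_smulₛₗ, smul_eq_mul] }
  letI : SeminormedAddCommGroup A := @InnerProductSpace.Core.toSeminormedAddCommGroup ℂ A _ _ _ P
  letI : NormedSpace ℂ A := @InnerProductSpace.Core.toNormedSpace ℂ A _ _ _ P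
  letI : InnerProductSpace ℂ A :=
  { toInner := P.toInner
    norm_sq_eq_re_inner := fun x => Real.sq_sqrt (P.re_inner_nonneg x)
    conj_inner_symm := P.conj_inner_symm
    add_left := P.add_left
    smul_left := P.smul_left }
  have hinner : ∀ x y : A, (inner ℂ x y : ℂ) = l (m (st x) y) := fun _ _ => rfl
  -- Cauchy-Schwarz consequence: null vectors are absorbed by left multiplication
  have hzero : ∀ x : A, (inner ℂ x x : ℂ) = 0 → ‖x‖ = 0 := by
    intro x hx
    have h1 : ‖x‖ ^ 2 = RCLike.re (inner ℂ x x : ℂ) := norm_sq_eq_re_inner x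
    rw [hx] at h1
    simpa using pow_eq_zero_iff (n := 2) (by norm_num) |>.mp (by simpa using h1)
  have hmul0 : ∀ (a x : A), ‖x‖ = 0 → ‖m a x‖ = 0 := by
    intro a x hx
    apply hzero
    have h1 : (inner ℂ (m a x) (m a x) : ℂ) = inner ℂ x (m (st a) (m a x)) := by
      rw [hinner, hinner, hstm, hassoc]
    have h2 : ‖(inner ℂ x (m (st a) (m a x)) : ℂ)‖ ≤ ‖x‖ * ‖m (st a) (m a x)‖ :=
      norm_inner_le_norm x _
    rw [hx, zero_mul] at h2
    rw [h1]
    exact norm_le_zero_iff.mp h2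
  have hmkeq : ∀ (a x y : A), Inseparable x y →
      SeparationQuotient.mk (m a x) = SeparationQuotient.mk (m a y) := by
    intro a x y hxy
    rw [SeparationQuotient.mk_eq_mk, Metric.inseparable_iff, dist_eq_norm]
    have hxy' : ‖x - y‖ = 0 := by
      rw [← dist_eq_norm, ← Metric.inseparable_iff]; exact hxy
    have := hmul0 a (x - y) hxy'
    rwa [map_sub] at this
  set K := SeparationQuotient A with hK
  -- left multiplication descends to the quotient
  let pi : A → (K →ₗ[ℂ] K) := fun a =>
  { toFun := SeparationQuotient.lift (fun b => SeparationQuotient.mk (m a b)) (hmkeq a)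
    map_add' := fun x y => by
      obtain ⟨x, rfl⟩ := SeparationQuotient.surjective_mk x
      obtain ⟨y, rfl⟩ := SeparationQuotient.surjective_mk y
      rw [← SeparationQuotient.mk_add]
      show SeparationQuotient.mk (m a (x + y)) = SeparationQuotient.mk (m a x) + SeparationQuotient.mk (m a y)
      rw [map_add, SeparationQuotient.mk_add]
    map_smul' := fun c x => by
      obtain ⟨x, rfl⟩ := SeparationQuotient.surjective_mk x
      rw [← SeparationQuotient.mk_smul]
      show SeparationQuotient.mk (m a (c • x)) = c • SeparationQuotient.mk (m a x)
      rw [map_smul, SeparationQuotient.mk_smul] }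
  have pi_mk : ∀ (a x : A), pi a (SeparationQuotient.mk x) = SeparationQuotient.mk (m a x) :=
    fun a x => rfl
  have inner_mk : ∀ x y : A,
      (inner ℂ (SeparationQuotient.mk x) (SeparationQuotient.mk y) : ℂ) = l (m (st x) y) :=
    fun x y => rfl
  have pi_add : ∀ (a b : A) (x : K), pi (a + b) x = pi a x + pi b x := by
    intro a b x
    obtain ⟨x, rfl⟩ := SeparationQuotient.surjective_mk x
    rw [pi_mk, pi_mk, pi_mk, ← SeparationQuotient.mk_add]
    congr 1
    simp [map_add]
  have pi_smul : ∀ (c : ℂ) (a : A) (x : K), pi (c • a) x = c • pi a x := by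
    intro c a x
    obtain ⟨x, rfl⟩ := SeparationQuotient.surjective_mk x
    rw [pi_mk, pi_mk, ← SeparationQuotient.mk_smul]
    congr 1
    simp [map_smul]
  have pi_mul : ∀ (a b : A) (x : K), pi (m a b) x = pi a (pi b x) := by
    intro a b x
    obtain ⟨x, rfl⟩ := SeparationQuotient.surjective_mk x
    rw [pi_mk, pi_mk, pi_mk, hassoc]
  have pi_adj : ∀ (a : A) (x y : K),
      (inner ℂ (pi (st a) x) y : ℂ) = inner ℂ x (pi a y) := by
    intro a x y
    obtain ⟨x, rfl⟩ := SeparationQuotient.surjective_mk x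
    obtain ⟨y, rfl⟩ := SeparationQuotient.surjective_mk y
    rw [pi_mk, pi_mk, inner_mk, inner_mk, hstm, hstst, hassoc]
  have inner_st_mul : ∀ (a b : A) (x : K),
      (inner ℂ (SeparationQuotient.mk (st (m a b))) x : ℂ) =
        inner ℂ (SeparationQuotient.mk (st a)) (pi b x) := by
    intro a b x
    obtain ⟨x, rfl⟩ := SeparationQuotient.surjective_mk x
    rw [pi_mk, inner_mk, inner_mk, hstst, hstst, hassoc]
  have mk_dt : SeparationQuotient.mk dt = (0 : K) := by
    rw [SeparationQuotient.mk_eq_zero_iff]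
    apply hzero
    rw [hinner, hstdt, hmdt, map_zero]
  -- the representation
  let I : A →ₗ[ℂ] ((ℂ × K × ℂ) →ₗ[ℂ] (ℂ × K × ℂ)) := LinearMap.mk₂ ℂ
    (fun a u => (l a * u.2.2 + (inner ℂ (SeparationQuotient.mk (st a)) u.2.1 : ℂ),
                 pi a u.2.1 + u.2.2 • SeparationQuotient.mk a, (0 : ℂ)))
    (fun a b u => by
      refine Prod.ext ?_ (Prod.ext ?_ ?_) <;>
        simp [map_add, SeparationQuotient.mk_add, inner_add_left, pi_add] <;> (try ring_nf) <;>
        abel)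
    (fun c a u => by
      refine Prod.ext ?_ (Prod.ext ?_ ?_) <;>
        simp [map_smulₛₗ, map_smul, SeparationQuotient.mk_smul, inner_smul_left, pi_smul,
          smul_smul, smul_eq_mul] <;> ring_nf)
    (fun a u v => by
      refine Prod.ext ?_ (Prod.ext ?_ ?_) <;>
        simp [inner_add_right, map_add, add_smul] <;> (try ring_nf) <;> abel)
    (fun c a u => by
      refine Prod.ext ?_ (Prod.ext ?_ ?_) <;>
        simp [inner_smul_right, map_smul, smul_smul, smul_eq_mul] <;> ring_nf)
  have I_apply : ∀ (a : A) (u : ℂ × K × ℂ), I a u =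
      (l a * u.2.2 + (inner ℂ (SeparationQuotient.mk (st a)) u.2.1 : ℂ),
       pi a u.2.1 + u.2.2 • SeparationQuotient.mk a, (0 : ℂ)) := fun a u => rfl
  refine ⟨K, inferInstance, inferInstance, I, ?_, ?_, ?_, ?_⟩
  · -- multiplicativity
    intro a b
    apply LinearMap.ext
    intro u
    rw [LinearMap.comp_apply, I_apply, I_apply, I_apply]
    refine Prod.ext ?_ (Prod.ext ?_ ?_)
    · show l (m a b) * u.2.2 + (inner ℂ (SeparationQuotient.mk (st (m a b))) u.2.1 : ℂ) =
        l a * 0 + (inner ℂ (SeparationQuotient.mk (st a))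
          (pi b u.2.1 + u.2.2 • SeparationQuotient.mk b) : ℂ)
      rw [inner_add_right, inner_smul_right, inner_st_mul]
      have : (inner ℂ (SeparationQuotient.mk (st a)) (SeparationQuotient.mk b) : ℂ) = l (m a b) := by
        rw [inner_mk, hstst]
      rw [this]
      ring
    · show pi (m a b) u.2.1 + u.2.2 • SeparationQuotient.mk (m a b) =
        pi a (pi b u.2.1 + u.2.2 • SeparationQuotient.mk b) + (0 : ℂ) • SeparationQuotient.mk a
      rw [map_add, map_smul, pi_mk, pi_mul, zero_smul, add_zero]
    · rfl
  · -- pseudo-adjointness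
    intro a u v
    simp only [I_apply]
    simp only [map_add, map_mul, map_zero, zero_mul, mul_zero, add_zero, zero_add]
    rw [inner_add_right, inner_add_left, inner_smul_right, inner_smul_left]
    rw [hstst]
    have h1 : (starRingEnd ℂ) (l (st a)) = l a := by
      rw [hlst, RingHomCompTriple.comp_apply]
      simp
    have h2 : (starRingEnd ℂ) (inner ℂ (SeparationQuotient.mk a) u.2.1 : ℂ) =
        inner ℂ u.2.1 (SeparationQuotient.mk a) := inner_conj_symm _ _
    rw [h1, h2, pi_adj]
    ring
  · -- vacuum expectation
    intro a
    simp only [I_apply]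
    simp [inner_mk]
  · -- action of dt
    intro u
    rw [I_apply]
    refine Prod.ext ?_ (Prod.ext ?_ ?_)
    · show l dt * u.2.2 + (inner ℂ (SeparationQuotient.mk (st dt)) u.2.1 : ℂ) = u.2.2
      rw [hldt, hstdt, mk_dt, inner_zero_left, one_mul, add_zero]
    · show pi dt u.2.1 + u.2.2 • SeparationQuotient.mk dt = 0
      have : pi dt u.2.1 = 0 := by
        obtain ⟨x, hx⟩ := SeparationQuotient.surjective_mk u.2.1
        rw [← hx, pi_mk, hdtm, SeparationQuotient.mk_zero]
      rw [this, mk_dt, smul_zero, add_zero]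
    · rfl
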